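/- Let $n = 2^m$ and let $v \in \{\pm 1\}^n$ have at most $\ell$ sign changes (i.e., at most $\ell$ indices $i \in [n-1]$ with $v_{i+1} \neq v_i$). Then the Haar wavelet transform $Hv$ of $v$ has at most $\ell \log_2 n + 1$ nonzero entries. -/
import Mathlib


/-- Entry of the Haar wavelet basis matrix for `ℝ^(2^m)`: `haarEntry m ν a` is the `a`-th
coordinate of the `ν`-th Haar wavelet (row `ν = 0` is the father wavelet; row
`ν = 2^i + j` for `0 ≤ j < 2^i`, `0 ≤ i < m` is the wavelet `ψ_{i,j}`, with `ν = 1`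
the mother wavelet). -/
noncomputable def haarEntry (m ν a : ℕ) : ℝ :=
  if ν = 0 then 1 / Real.sqrt (2 ^ m)
  else
    let i := Nat.log 2 ν
    let j := ν - 2 ^ i
    let len := 2 ^ (m - i)
    if len * j ≤ a ∧ a < len * j + len / 2 then 1 / Real.sqrt (len : ℝ)
    else if len * j + len / 2 ≤ a ∧ a < len * (j + 1) then -(1 / Real.sqrt (len : ℝ))
    else 0

lemma haarEntry_eq (m ν a : ℕ) (hν : ν ≠ 0) :
    haarEntry m ν a =
      if 2 ^ (m - Nat.log 2 ν) * (ν - 2 ^ Nat.log 2 ν) ≤ a ∧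
          a < 2 ^ (m - Nat.log 2 ν) * (ν - 2 ^ Nat.log 2 ν) + 2 ^ (m - Nat.log 2 ν) / 2 then
        1 / Real.sqrt (2 ^ (m - Nat.log 2 ν) : ℕ)
      else if 2 ^ (m - Nat.log 2 ν) * (ν - 2 ^ Nat.log 2 ν) + 2 ^ (m - Nat.log 2 ν) / 2 ≤ a ∧
          a < 2 ^ (m - Nat.log 2 ν) * (ν - 2 ^ Nat.log 2 ν + 1) then
        -(1 / Real.sqrt (2 ^ (m - Nat.log 2 ν) : ℕ))
      else 0 := by
  rw [haarEntry, if_neg hν]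

lemma const_of_no_change (v : ℕ → ℝ) (L R : ℕ)
    (h : ∀ k, L ≤ k → k + 1 < R → v (k + 1) = v k) :
    ∀ a, L ≤ a → a < R → v a = v L := by
  intro a
  induction a with
  | zero => intro h1 _; rw [Nat.le_zero.mp h1]
  | succ a ih =>
    intro h1 h2
    rcases Nat.lt_or_ge a L with hL | hL
    · have : L = a + 1 := by omega
      rw [this]
    · rw [h a hL h2, ih hL (by omega)]

lemma support_bound (m ν : ℕ) (hν : ν ≠ 0) (hlt : ν < 2 ^ m) :
    2 ^ (m - Nat.log 2 ν) * (ν - 2 ^ Nat.log 2 ν + 1) ≤ 2 ^ m ∧ Nat.log 2 ν < m := by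
  set i := Nat.log 2 ν with hi
  have h1 : 2 ^ i ≤ ν := Nat.pow_log_le_self 2 hν
  have h2 : ν < 2 ^ (i + 1) := Nat.lt_pow_succ_log_self (by norm_num) ν
  have him : i < m := Nat.log_lt_of_lt_pow hν hlt
  constructor
  · calc 2 ^ (m - i) * (ν - 2 ^ i + 1) ≤ 2 ^ (m - i) * 2 ^ i := by
          apply Nat.mul_le_mul_left
          rw [pow_succ] at h2; omega
      _ = 2 ^ m := by rw [← pow_add]; congr 1; omega
  · exact him

lemma haar_sum_eq (m ν : ℕ) (v : ℕ → ℝ) (hν : ν ≠ 0) (hlt : ν < 2 ^ m)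
    (hconst : ∀ k, 2 ^ (m - Nat.log 2 ν) * (ν - 2 ^ Nat.log 2 ν) ≤ k →
      k + 1 < 2 ^ (m - Nat.log 2 ν) * (ν - 2 ^ Nat.log 2 ν) + 2 ^ (m - Nat.log 2 ν) →
      v (k + 1) = v k) :
    (∑ a ∈ Finset.range (2 ^ m), haarEntry m ν a * v a) = 0 := by
  set i := Nat.log 2 ν with hi
  set j := ν - 2 ^ i with hj
  obtain ⟨hRm, him⟩ := support_bound m ν hν hlt
  set L := 2 ^ (m - i) * j with hL
  have hmi : m - i = (m - i - 1) + 1 := by omega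
  set s := m - i - 1 with hs
  have hlen2 : 2 ^ (m - i) / 2 = 2 ^ s := by rw [hmi, pow_succ, Nat.mul_div_cancel _ (by norm_num)]
  have hlen : 2 ^ (m - i) = 2 ^ s + 2 ^ s := by rw [hmi, pow_succ]; ring
  set M := L + 2 ^ s with hM
  set R := L + 2 ^ (m - i) with hR
  have hRj : 2 ^ (m - i) * (j + 1) = R := by rw [hR, hL]; ring
  have hR2m : R ≤ 2 ^ m := by rw [← hRj]; exact hRm
  have key : ∀ a, haarEntry m ν a * v a =
      (if L ≤ a ∧ a < M then (1 / Real.sqrt (2 ^ (m - i) : ℕ)) * v a else 0) +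
      (if M ≤ a ∧ a < R then (-(1 / Real.sqrt (2 ^ (m - i) : ℕ))) * v a else 0) := by
    intro a
    rw [haarEntry_eq m ν a hν, ← hi, ← hj, ← hL, hlen2, ← hM, hRj]
    by_cases h1 : L ≤ a ∧ a < M
    · rw [if_pos h1, if_pos h1, if_neg (by omega), add_zero]
    · rw [if_neg h1, if_neg h1, zero_add]
      by_cases h2 : M ≤ a ∧ a < R
      · rw [if_pos h2, if_pos h2]
      · rw [if_neg h2, if_neg h2, zero_mul]
  simp only [key, Finset.sum_add_distrib]
  rw [← Finset.sum_filter, ← Finset.sum_filter]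
  have hf1 : (Finset.range (2 ^ m)).filter (fun a => L ≤ a ∧ a < M) = Finset.Ico L M := by
    ext a; simp [Finset.mem_Ico, Finset.mem_range]; omega
  have hf2 : (Finset.range (2 ^ m)).filter (fun a => M ≤ a ∧ a < R) = Finset.Ico M R := by
    ext a; simp [Finset.mem_Ico, Finset.mem_range]; omega
  rw [hf1, hf2]
  have hc : ∀ a, L ≤ a → a < R → v a = v L :=
    const_of_no_change v L R hconst
  have hML : M - L = 2 ^ s := by rw [hM]; exact Nat.add_sub_cancel_left _ _
  have hRM : R - M = 2 ^ s := by rw [hR, hM, hlen]; generalize (2:ℕ)^s = t; omega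
  have e1 : ∑ a ∈ Finset.Ico L M, (1 / Real.sqrt (2 ^ (m - i) : ℕ)) * v a
      = (2 ^ s : ℕ) * ((1 / Real.sqrt (2 ^ (m - i) : ℕ)) * v L) := by
    rw [Finset.sum_congr rfl (fun a ha => ?_), Finset.sum_const, Nat.card_Ico, hML, nsmul_eq_mul]
    rw [hc a (Finset.mem_Ico.mp ha).1 (by have := (Finset.mem_Ico.mp ha).2; omega)]
  have e2 : ∑ a ∈ Finset.Ico M R, (-(1 / Real.sqrt (2 ^ (m - i) : ℕ))) * v a
      = (2 ^ s : ℕ) * ((-(1 / Real.sqrt (2 ^ (m - i) : ℕ))) * v L) := by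
    rw [Finset.sum_congr rfl (fun a ha => ?_), Finset.sum_const, Nat.card_Ico, hRM, nsmul_eq_mul]
    rw [hc a (by have := (Finset.mem_Ico.mp ha).1; omega) (Finset.mem_Ico.mp ha).2]
  rw [e1, e2]; ring

open scoped Classical in
theorem stmt_4 (m ℓ : ℕ) (v : ℕ → ℝ)
    (hv : ∀ a < 2 ^ m, v a = 1 ∨ v a = -1)
    (hsign : ((Finset.range (2 ^ m - 1)).filter (fun i => v (i + 1) ≠ v i)).card ≤ ℓ) :
    ((Finset.range (2 ^ m)).filter
        (fun ν => (∑ a ∈ Finset.range (2 ^ m), haarEntry m ν a * v a) ≠ 0)).card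
      ≤ ℓ * m + 1 := by
  classical
  set S := (Finset.range (2 ^ m - 1)).filter (fun i => v (i + 1) ≠ v i) with hS
  set T := (Finset.range (2 ^ m)).filter
      (fun ν => (∑ a ∈ Finset.range (2 ^ m), haarEntry m ν a * v a) ≠ 0) with hT
  have h1 : T.card ≤ (T.erase 0).card + 1 := by
    have : T ⊆ insert 0 (T.erase 0) := by
      intro x hx
      by_cases h : x = 0
      · simp [h]
      · exact Finset.mem_insert_of_mem (Finset.mem_erase.mpr ⟨h, hx⟩)
    exact le_trans (Finset.card_le_card this) (Finset.card_insert_le _ _)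
  have key : ∀ ν ∈ T.erase 0, ∃ k,
      2 ^ (m - Nat.log 2 ν) * (ν - 2 ^ Nat.log 2 ν) ≤ k ∧
      k + 1 < 2 ^ (m - Nat.log 2 ν) * (ν - 2 ^ Nat.log 2 ν) + 2 ^ (m - Nat.log 2 ν) ∧
      v (k + 1) ≠ v k := by
    intro ν hνe
    have hν0 : ν ≠ 0 := (Finset.mem_erase.mp hνe).1
    have hνT := Finset.mem_filter.mp (Finset.mem_of_mem_erase hνe)
    have hνlt : ν < 2 ^ m := Finset.mem_range.mp hνT.1
    by_contra hcon
    push_neg at hcon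
    exact hνT.2 (haar_sum_eq m ν v hν0 hνlt (fun k h1 h2 => hcon k h1 h2))
  have h2 : (T.erase 0).card ≤ S.card * m := by
    have := Finset.card_le_card_of_injOn
      (f := fun ν => ((if h : ∃ k,
          2 ^ (m - Nat.log 2 ν) * (ν - 2 ^ Nat.log 2 ν) ≤ k ∧
          k + 1 < 2 ^ (m - Nat.log 2 ν) * (ν - 2 ^ Nat.log 2 ν) + 2 ^ (m - Nat.log 2 ν) ∧
          v (k + 1) ≠ v k then Nat.find h else 0), Nat.log 2 ν))
      (s := T.erase 0) (t := S ×ˢ Finset.range m) ?_ ?_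
    · simpa [Finset.card_product] using this
    · intro ν hν
      have hν0 : ν ≠ 0 := (Finset.mem_erase.mp hν).1
      have hνlt : ν < 2 ^ m := Finset.mem_range.mp
        (Finset.mem_filter.mp (Finset.mem_of_mem_erase hν)).1
      obtain ⟨hsup, hlog⟩ := support_bound m ν hν0 hνlt
      simp only []
      rw [dif_pos (key ν hν)]
      obtain ⟨hk1, hk2, hk3⟩ := Nat.find_spec (key ν hν)
      refine Finset.mem_product.mpr ⟨Finset.mem_filter.mpr ⟨Finset.mem_range.mpr ?_, hk3⟩,
        Finset.mem_range.mpr hlog⟩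
      have : 2 ^ (m - Nat.log 2 ν) * (ν - 2 ^ Nat.log 2 ν) + 2 ^ (m - Nat.log 2 ν) ≤ 2 ^ m := by
        have := hsup; nlinarith [this]
      omega
    · intro ν₁ hν₁ ν₂ hν₂ heq
      simp only [Prod.mk.injEq] at heq
      rw [dif_pos (key ν₁ hν₁), dif_pos (key ν₂ hν₂)] at heq
      obtain ⟨hkeq, hieq⟩ := heq
      have s₁ := Nat.find_spec (key ν₁ hν₁)
      have s₂ := Nat.find_spec (key ν₂ hν₂)
      rw [hkeq] at s₁
      set k := Nat.find (key ν₂ hν₂)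
      set i := Nat.log 2 ν₂ with hi
      rw [hieq] at s₁
      have hj₁ : k / 2 ^ (m - i) = ν₁ - 2 ^ i := Nat.div_eq_of_lt_le
        (by rw [Nat.mul_comm]; exact s₁.1)
        (by rw [Nat.add_mul, Nat.one_mul, Nat.mul_comm (ν₁ - 2 ^ i)]; omega)
      have hj₂ : k / 2 ^ (m - i) = ν₂ - 2 ^ i := Nat.div_eq_of_lt_le
        (by rw [Nat.mul_comm]; exact s₂.1)
        (by rw [Nat.add_mul, Nat.one_mul, Nat.mul_comm (ν₂ - 2 ^ i)]; omega)
      have hp₁ : 2 ^ i ≤ ν₁ := by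
        rw [← hieq]; exact Nat.pow_log_le_self 2 (Finset.mem_erase.mp hν₁).1
      have hp₂ : 2 ^ i ≤ ν₂ := Nat.pow_log_le_self 2 (Finset.mem_erase.mp hν₂).1
      omega
  calc T.card ≤ (T.erase 0).card + 1 := h1
    _ ≤ S.card * m + 1 := by omega
    _ ≤ ℓ * m + 1 := by
        have := Nat.mul_le_mul_right m hsign
        omega
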